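/- arXiv:1802.07188 — 2 statements merged into one kernel-verified Lean document; each statement's English description precedes it below -/
import Mathlib

section
/- Differentiating with respect to ρ the one-sided velocity matching condition v⁺(t_eve(ρ),ρ) = h(t_eve(ρ), q(t_eve(ρ),ρ), v⁻(t_eve(ρ),ρ), ρ) yields the jump formula for velocity sensitivities: V⁺ = h_q·Q⁻ + h_v·V⁻ + (h_q·v⁻ − a⁺ + h_v·a⁻ + h_t)·(dt_eve/dρ) + h_ρ, where a± denote the one-sided accelerations and Q⁻, V± the one-sided sensitivities of position and velocity at fixed time. -/
section Helpers
variable {E F : Type*} [NormedAddCommGroup E] [NormedSpace ℝ E]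
  [NormedAddCommGroup F] [NormedSpace ℝ F]

lemma slice_hasDerivAt (f : ℝ × E → F) {t₀ : ℝ} {x₀ : E}
    (hf : DifferentiableAt ℝ f (t₀, x₀)) :
    HasDerivAt (fun s => f (s, x₀)) (fderiv ℝ f (t₀, x₀) (1, 0)) t₀ :=
  hf.hasFDerivAt.comp_hasDerivAt t₀ (HasDerivAt.prodMk (hasDerivAt_id t₀) (hasDerivAt_const t₀ x₀))

lemma fix_time_hasFDerivAt (f : ℝ × E → F) {t₀ : ℝ} {x₀ : E}
    (hf : DifferentiableAt ℝ f (t₀, x₀)) :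
    HasFDerivAt (fun ρ => f (t₀, ρ))
      ((fderiv ℝ f (t₀, x₀)).comp ((0 : E →L[ℝ] ℝ).prod (ContinuousLinearMap.id ℝ E))) x₀ :=
  hf.hasFDerivAt.comp x₀ (HasFDerivAt.prodMk (hasFDerivAt_const t₀ x₀) (hasFDerivAt_id x₀))

lemma deriv_eq_fderiv' (f : ℝ × E → F) (hf : Differentiable ℝ f) (x : ℝ × E) :
    deriv (fun s => f (s, x.2)) x.1 = fderiv ℝ f x (1, 0) := by
  have := slice_hasDerivAt f (hf (x.1, x.2))
  simpa using this.deriv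

end Helpers


/-- Jump formula for velocity sensitivities: differentiating the one-sided velocity
matching condition `v⁺(t_eve(ρ),ρ) = h(t_eve(ρ), q(t_eve(ρ),ρ), v⁻(t_eve(ρ),ρ), ρ)`
with respect to `ρ` yields
`V⁺ = h_q·Q⁻ + h_v·V⁻ + (h_q·v⁻ − a⁺ + h_v·a⁻ + h_t)·(dt_eve/dρ) + h_ρ`. -/
theorem velocity_sensitivity_jump {n p : ℕ}
    (qm qp : ℝ × (Fin p → ℝ) → (Fin n → ℝ))
    (teve : (Fin p → ℝ) → ℝ)
    (h : ℝ × (Fin n → ℝ) × (Fin n → ℝ) × (Fin p → ℝ) → (Fin n → ℝ))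
    (ρ₀ : Fin p → ℝ)
    (hqm : ContDiff ℝ 2 qm) (hqp : ContDiff ℝ 2 qp)
    (hh : ContDiff ℝ 1 h)
    (hteve : DifferentiableAt ℝ teve ρ₀)
    (hmatch : ∀ ρ, qp (teve ρ, ρ) = qm (teve ρ, ρ))
    (vm vp : ℝ × (Fin p → ℝ) → (Fin n → ℝ))
    (hvm : vm = fun x => deriv (fun s => qm (s, x.2)) x.1)
    (hvp : vp = fun x => deriv (fun s => qp (s, x.2)) x.1)
    (hjump : ∀ ρ, vp (teve ρ, ρ) = h (teve ρ, qm (teve ρ, ρ), vm (teve ρ, ρ), ρ)) :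
    ∀ dρ : Fin p → ℝ,
      fderiv ℝ (fun ρ => vp (teve ρ₀, ρ)) ρ₀ dρ =
        -- h_q · Q⁻
        (fderiv ℝ h (teve ρ₀, qm (teve ρ₀, ρ₀), vm (teve ρ₀, ρ₀), ρ₀))
          (0, fderiv ℝ (fun ρ => qm (teve ρ₀, ρ)) ρ₀ dρ, 0, 0)
        -- h_v · V⁻
        + (fderiv ℝ h (teve ρ₀, qm (teve ρ₀, ρ₀), vm (teve ρ₀, ρ₀), ρ₀))
            (0, 0, fderiv ℝ (fun ρ => vm (teve ρ₀, ρ)) ρ₀ dρ, 0)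
        -- (h_q·v⁻ − a⁺ + h_v·a⁻ + h_t)·(dt_eve/dρ)
        + (fderiv ℝ teve ρ₀ dρ) •
            ((fderiv ℝ h (teve ρ₀, qm (teve ρ₀, ρ₀), vm (teve ρ₀, ρ₀), ρ₀))
                (0, vm (teve ρ₀, ρ₀), 0, 0)
              - deriv (fun s => vp (s, ρ₀)) (teve ρ₀)
              + (fderiv ℝ h (teve ρ₀, qm (teve ρ₀, ρ₀), vm (teve ρ₀, ρ₀), ρ₀))
                  (0, 0, deriv (fun s => vm (s, ρ₀)) (teve ρ₀), 0)
              + (fderiv ℝ h (teve ρ₀, qm (teve ρ₀, ρ₀), vm (teve ρ₀, ρ₀), ρ₀))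
                  (1, 0, 0, 0))
        -- h_ρ
        + (fderiv ℝ h (teve ρ₀, qm (teve ρ₀, ρ₀), vm (teve ρ₀, ρ₀), ρ₀))
            (0, 0, 0, dρ) := by
  intro dρ
  -- differentiability basics
  have hqmd : Differentiable ℝ qm := hqm.differentiable (by norm_num)
  have hqpd : Differentiable ℝ qp := hqp.differentiable (by norm_num)
  have hvm1 : ContDiff ℝ 1 vm := by
    have h1 : vm = fun x => fderiv ℝ qm x ((1:ℝ), (0 : Fin p → ℝ)) := by
      rw [hvm]; funext x; exact deriv_eq_fderiv' qm hqmd x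
    rw [h1]
    exact (hqm.fderiv_right (by norm_num)).clm_apply contDiff_const
  have hvp1 : ContDiff ℝ 1 vp := by
    have h1 : vp = fun x => fderiv ℝ qp x ((1:ℝ), (0 : Fin p → ℝ)) := by
      rw [hvp]; funext x; exact deriv_eq_fderiv' qp hqpd x
    rw [h1]
    exact (hqp.fderiv_right (by norm_num)).clm_apply contDiff_const
  have hvmd : Differentiable ℝ vm := hvm1.differentiable (by norm_num)
  have hvpd : Differentiable ℝ vp := hvp1.differentiable (by norm_num)
  have hhd : Differentiable ℝ h := hh.differentiable (by norm_num)
  set t₀ := teve ρ₀ with ht₀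
  set T := fderiv ℝ teve ρ₀ with hT
  set Ap := fderiv ℝ vp (t₀, ρ₀) with hAp
  set Am := fderiv ℝ vm (t₀, ρ₀) with hAm
  set Bq := fderiv ℝ qm (t₀, ρ₀) with hBq
  set L := fderiv ℝ h (t₀, qm (t₀, ρ₀), vm (t₀, ρ₀), ρ₀) with hL
  have hTd : HasFDerivAt teve T ρ₀ := hteve.hasFDerivAt
  have hinner : HasFDerivAt (fun ρ => (teve ρ, ρ))
      (T.prod (ContinuousLinearMap.id ℝ (Fin p → ℝ))) ρ₀ := HasFDerivAt.prodMk hTd (hasFDerivAt_id ρ₀)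
  have hqmc : HasFDerivAt (fun ρ => qm (teve ρ, ρ))
      (Bq.comp (T.prod (ContinuousLinearMap.id ℝ (Fin p → ℝ)))) ρ₀ :=
    HasFDerivAt.comp (g := qm) ρ₀ (hqmd (t₀, ρ₀)).hasFDerivAt hinner
  have hvmc : HasFDerivAt (fun ρ => vm (teve ρ, ρ))
      (Am.comp (T.prod (ContinuousLinearMap.id ℝ (Fin p → ℝ)))) ρ₀ :=
    HasFDerivAt.comp (g := vm) ρ₀ (hvmd (t₀, ρ₀)).hasFDerivAt hinner
  have hvpc : HasFDerivAt (fun ρ => vp (teve ρ, ρ))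
      (Ap.comp (T.prod (ContinuousLinearMap.id ℝ (Fin p → ℝ)))) ρ₀ :=
    HasFDerivAt.comp (g := vp) ρ₀ (hvpd (t₀, ρ₀)).hasFDerivAt hinner
  have hrhs : HasFDerivAt (fun ρ => h (teve ρ, qm (teve ρ, ρ), vm (teve ρ, ρ), ρ))
      (L.comp (T.prod (((Bq.comp (T.prod (ContinuousLinearMap.id ℝ (Fin p → ℝ)))).prod
        ((Am.comp (T.prod (ContinuousLinearMap.id ℝ (Fin p → ℝ)))).prod
          (ContinuousLinearMap.id ℝ (Fin p → ℝ))))))) ρ₀ :=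
    HasFDerivAt.comp (g := h) ρ₀ (hhd (t₀, qm (t₀, ρ₀), vm (t₀, ρ₀), ρ₀)).hasFDerivAt
      (HasFDerivAt.prodMk hTd (HasFDerivAt.prodMk hqmc (HasFDerivAt.prodMk hvmc (hasFDerivAt_id ρ₀))))
  -- the key equation from differentiating hjump
  have hfe : (fun ρ => vp (teve ρ, ρ))
      = (fun ρ => h (teve ρ, qm (teve ρ, ρ), vm (teve ρ, ρ), ρ)) := funext hjump
  have star : Ap (T dρ, dρ) = L (T dρ, Bq (T dρ, dρ), Am (T dρ, dρ), dρ) := by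
    have e1 := hvpc.fderiv
    have e2 := hrhs.fderiv
    rw [hfe] at e1
    have := e1.symm.trans e2
    have := congrArg (fun (M : (Fin p → ℝ) →L[ℝ] (Fin n → ℝ)) => M dρ) this
    simpa using this
  -- rewrite all the derivatives in the goal
  have g1 : fderiv ℝ (fun ρ => vp (t₀, ρ)) ρ₀ dρ = Ap (0, dρ) := by
    rw [(fix_time_hasFDerivAt vp (hvpd (t₀, ρ₀))).fderiv]; simp; rfl
  have g2 : fderiv ℝ (fun ρ => qm (t₀, ρ)) ρ₀ dρ = Bq (0, dρ) := by
    rw [(fix_time_hasFDerivAt qm (hqmd (t₀, ρ₀))).fderiv]; simp; rfl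
  have g3 : fderiv ℝ (fun ρ => vm (t₀, ρ)) ρ₀ dρ = Am (0, dρ) := by
    rw [(fix_time_hasFDerivAt vm (hvmd (t₀, ρ₀))).fderiv]; simp; rfl
  have g4 : deriv (fun s => vp (s, ρ₀)) t₀ = Ap (1, 0) :=
    (slice_hasDerivAt vp (hvpd (t₀, ρ₀))).deriv
  have g5 : deriv (fun s => vm (s, ρ₀)) t₀ = Am (1, 0) :=
    (slice_hasDerivAt vm (hvmd (t₀, ρ₀))).deriv
  have g6 : vm (t₀, ρ₀) = Bq (1, 0) := by
    rw [hvm]; exact (slice_hasDerivAt qm (hqmd (t₀, ρ₀))).deriv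
  rw [g1, g2, g3, g4, g5]
  rw [show (0, vm (t₀, ρ₀), 0, 0) = ((0:ℝ), Bq (1,0), (0 : Fin n → ℝ), (0 : Fin p → ℝ)) by rw [g6]]
  -- expand linearity in star
  set c := T dρ with hc
  have e1 : Ap (c, dρ) = c • Ap (1, 0) + Ap (0, dρ) := by
    have : ((c : ℝ), dρ) = c • ((1:ℝ), (0 : Fin p → ℝ)) + ((0:ℝ), dρ) := by
      simp [Prod.ext_iff]
    rw [this, map_add, map_smul]
  have e2 : Bq (c, dρ) = c • Bq (1, 0) + Bq (0, dρ) := by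
    have : ((c : ℝ), dρ) = c • ((1:ℝ), (0 : Fin p → ℝ)) + ((0:ℝ), dρ) := by
      simp [Prod.ext_iff]
    rw [this, map_add, map_smul]
  have e3 : Am (c, dρ) = c • Am (1, 0) + Am (0, dρ) := by
    have : ((c : ℝ), dρ) = c • ((1:ℝ), (0 : Fin p → ℝ)) + ((0:ℝ), dρ) := by
      simp [Prod.ext_iff]
    rw [this, map_add, map_smul]
  have e4 : ∀ (a : ℝ) (x y : Fin n → ℝ) (d : Fin p → ℝ),
      L (a, x, y, d) = a • L (1, 0, 0, 0) + L (0, x, 0, 0) + L (0, 0, y, 0) + L (0, 0, 0, d) := by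
    intro a x y d
    have : ((a:ℝ), x, y, d)
        = a • ((1:ℝ), (0:Fin n → ℝ), (0:Fin n → ℝ), (0:Fin p → ℝ))
          + ((0:ℝ), x, 0, 0) + ((0:ℝ), 0, y, 0) + ((0:ℝ), 0, 0, d) := by
      simp [Prod.ext_iff]
    rw [this, map_add, map_add, map_add, map_smul]
  have e5 : ∀ (u w : Fin n → ℝ), L (0, u + w, 0, 0) = L (0, u, 0, 0) + L (0, w, 0, 0) := by
    intro u w
    have : ((0:ℝ), u + w, (0:Fin n → ℝ), (0:Fin p → ℝ))
        = ((0:ℝ), u, 0, 0) + ((0:ℝ), w, 0, 0) := by simp [Prod.ext_iff]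
    rw [this, map_add]
  have e5' : ∀ (a : ℝ) (u : Fin n → ℝ), L (0, a • u, 0, 0) = a • L (0, u, 0, 0) := by
    intro a u
    have : ((0:ℝ), a • u, (0:Fin n → ℝ), (0:Fin p → ℝ))
        = a • ((0:ℝ), u, 0, 0) := by simp [Prod.ext_iff]
    rw [this, map_smul]
  have e6 : ∀ (u w : Fin n → ℝ), L (0, 0, u + w, 0) = L (0, 0, u, 0) + L (0, 0, w, 0) := by
    intro u w
    have : ((0:ℝ), (0:Fin n → ℝ), u + w, (0:Fin p → ℝ))
        = ((0:ℝ), 0, u, 0) + ((0:ℝ), 0, w, 0) := by simp [Prod.ext_iff]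
    rw [this, map_add]
  have e6' : ∀ (a : ℝ) (u : Fin n → ℝ), L (0, 0, a • u, 0) = a • L (0, 0, u, 0) := by
    intro a u
    have : ((0:ℝ), (0:Fin n → ℝ), a • u, (0:Fin p → ℝ))
        = a • ((0:ℝ), 0, u, 0) := by simp [Prod.ext_iff]
    rw [this, map_smul]
  rw [e1, e2, e3, e4, e5, e5', e6, e6'] at star
  linear_combination (norm := module) star
end

section
/- The adjoint variables λ = (λ^Q, λ^V, λ^Γ) of the index-1 DAE 'λ formulation' and the constraint multipliers μ = (μ^Q, μ^V, μ^Γ) of the 'μ formulation' are related by λ = Kᵀ·μ where K = [[I,0,0],[0,M,Φ_qᵀ],[0,Φ_q,0]]; consequently, if M is symmetric positive definite and Φ_q has full row rank, the correspondence μ ↦ λ is a linear bijection. -/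
open Matrix

lemma key_mulVec_zero {n m : ℕ}
    (M : Matrix (Fin n) (Fin n) ℝ) (hM : M.PosDef)
    (Φq : Matrix (Fin m) (Fin n) ℝ) (hΦ : Φq.rank = m)
    (K : Matrix (Fin n ⊕ (Fin n ⊕ Fin m)) (Fin n ⊕ (Fin n ⊕ Fin m)) ℝ)
    (hK : K = Matrix.fromBlocks (1 : Matrix (Fin n) (Fin n) ℝ) 0 0
        (Matrix.fromBlocks M Φqᵀ Φq (0 : Matrix (Fin m) (Fin m) ℝ)))
    (x : Fin n ⊕ (Fin n ⊕ Fin m) → ℝ) (hx : K *ᵥ x = 0) : x = 0 := by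
  -- decompose x
  have hLI : LinearIndependent ℝ (fun i ↦ Φq i) := by
    rw [linearIndependent_iff_card_eq_finrank_span]
    rw [Matrix.rank_eq_finrank_span_row] at hΦ
    simp only [Set.finrank, Fintype.card_fin]; exact hΦ.symm
  have hinj : Function.Injective (Φqᵀ.mulVec) := by
    rw [Matrix.mulVec_injective_iff]
    exact hLI
  set a : Fin n → ℝ := x ∘ Sum.inl with ha
  set u : Fin n → ℝ := x ∘ Sum.inr ∘ Sum.inl with hu
  set v : Fin m → ℝ := x ∘ Sum.inr ∘ Sum.inr with hv
  rw [hK, Matrix.fromBlocks_mulVec, Matrix.fromBlocks_mulVec] at hx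
  have h1 : a = 0 := by
    funext i; simpa [ha] using congrFun hx (Sum.inl i)
  have h2 : M *ᵥ u + Φqᵀ *ᵥ v = 0 := by
    funext i; simpa [hu, hv, Function.comp_assoc] using congrFun hx (Sum.inr (Sum.inl i))
  have h3 : Φq *ᵥ u = 0 := by
    funext i; simpa [hu, Function.comp_assoc] using congrFun hx (Sum.inr (Sum.inr i))
  have hquad : u ⬝ᵥ (M *ᵥ u) = 0 := by
    have := congrArg (fun w => u ⬝ᵥ w) h2
    simp only [dotProduct_add, dotProduct_zero] at this
    have h4 : u ⬝ᵥ (Φqᵀ *ᵥ v) = 0 := by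
      rw [dotProduct_mulVec, vecMul_transpose, h3, zero_dotProduct]
    linarith [this, h4]
  have hu0 : u = 0 := by
    by_contra h
    have := (Matrix.posDef_iff_dotProduct_mulVec.mp hM).2 h
    rw [show star u = u from rfl] at this
    rw [hquad] at this
    exact lt_irrefl 0 this
  have hv0 : v = 0 := by
    apply hinj
    rw [mulVec_zero]
    rw [hu0, mulVec_zero, zero_add] at h2
    exact h2
  funext i
  rcases i with i | (i | i)
  · exact congrFun h1 i
  · exact congrFun hu0 i
  · exact congrFun hv0 i

/-- The adjoint variables of the 'λ formulation' and the multipliers of the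
'μ formulation' are related by `λ = Kᵀ·μ` with
`K = [[I,0,0],[0,M,Φ_qᵀ],[0,Φ_q,0]]`; for `M` symmetric positive definite and
`Φ_q` of full row rank, `K` is invertible, so `μ ↦ Kᵀ·μ` is a linear bijection. -/
theorem adjoint_mu_lambda_bijection {n m c : ℕ}
    (M : Matrix (Fin n) (Fin n) ℝ) (hM : M.PosDef)
    (Φq : Matrix (Fin m) (Fin n) ℝ) (hΦ : Φq.rank = m)
    (K : Matrix (Fin n ⊕ (Fin n ⊕ Fin m)) (Fin n ⊕ (Fin n ⊕ Fin m)) ℝ)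
    (hK : K = Matrix.fromBlocks (1 : Matrix (Fin n) (Fin n) ℝ) 0 0
        (Matrix.fromBlocks M Φqᵀ Φq (0 : Matrix (Fin m) (Fin m) ℝ))) :
    IsUnit K ∧
      Function.Bijective
        (fun μ : Matrix (Fin n ⊕ (Fin n ⊕ Fin m)) (Fin c) ℝ => Kᵀ * μ) := by
  have hUnit : IsUnit K := by
    rw [← Matrix.mulVec_injective_iff_isUnit]
    intro x y hxy
    have : K *ᵥ (x - y) = 0 := by rw [mulVec_sub, hxy, sub_self]
    have := key_mulVec_zero M hM Φq hΦ K hK _ this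
    exact sub_eq_zero.mp this
  refine ⟨hUnit, ?_⟩
  have hUnitT : IsUnit Kᵀ := by rwa [Matrix.isUnit_transpose]
  have hdet : IsUnit Kᵀ.det := (Matrix.isUnit_iff_isUnit_det Kᵀ).mp hUnitT
  constructor
  · intro p q hpq
    simp only at hpq
    calc p = (Kᵀ⁻¹ * Kᵀ) * p := by rw [Matrix.nonsing_inv_mul Kᵀ hdet, Matrix.one_mul]
    _ = (Kᵀ⁻¹ * Kᵀ) * q := by rw [Matrix.mul_assoc, hpq, Matrix.mul_assoc]
    _ = q := by rw [Matrix.nonsing_inv_mul Kᵀ hdet, Matrix.one_mul]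
  · intro p
    refine ⟨(Kᵀ)⁻¹ * p, ?_⟩
    simp only
    rw [← Matrix.mul_assoc, Matrix.mul_nonsing_inv Kᵀ hdet, Matrix.one_mul]
end
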